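/- arXiv:1809.09345 — 4 statements merged into one kernel-verified Lean document; each statement's English description precedes it below -/
import Mathlib

section
/- Let G be a graph, let F be obtained from G by adding, for each vertex v of G, a new pendant vertex v' adjacent only to v. Then every maximum cut of F is a bisection, i.e., if (A, B) is a cut of F maximizing the number of edges with one endpoint in each side, then |A| = |B|. -/
/-- The size of the cut `(A, Aᶜ)`: the number of edges with one endpoint in `A`
and the other outside `A`, counted via ordered pairs `(p.1, p.2)` with
`p.1 ∈ A`, `p.2 ∉ A` (each crossing edge is counted exactly once this way). -/
noncomputable def cutSize {V : Type*} (G : SimpleGraph V) (A : Set V) : ℕ :=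
  Nat.card {p : V × V // G.Adj p.1 p.2 ∧ p.1 ∈ A ∧ p.2 ∉ A}

/-- The graph obtained from `G` by adding a pendant vertex `inr v` adjacent only to
`inl v`, for every vertex `v` of `G`. -/
def pendantGraph {V : Type*} (G : SimpleGraph V) : SimpleGraph (V ⊕ V) where
  Adj a b := match a, b with
    | Sum.inl u, Sum.inl v => G.Adj u v
    | Sum.inl u, Sum.inr v => u = v
    | Sum.inr u, Sum.inl v => u = v
    | Sum.inr _, Sum.inr _ => False
  symm := by
    refine ⟨?_⟩
    rintro (u | u) (v | v) h <;> simp_all <;> exact h.symm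
  loopless := by
    refine ⟨?_⟩
    rintro (u | u) h <;> simp_all

open Sum

lemma pend_ll {V : Type*} {G : SimpleGraph V} {u w : V} :
    (pendantGraph G).Adj (inl u) (inl w) ↔ G.Adj u w := Iff.rfl
lemma pend_lr {V : Type*} {G : SimpleGraph V} {u w : V} :
    (pendantGraph G).Adj (inl u) (inr w) ↔ u = w := Iff.rfl
lemma pend_rl {V : Type*} {G : SimpleGraph V} {u w : V} :
    (pendantGraph G).Adj (inr u) (inl w) ↔ u = w := Iff.rfl
lemma pend_rr {V : Type*} {G : SimpleGraph V} {u w : V} :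
    (pendantGraph G).Adj (inr u) (inr w) ↔ False := Iff.rfl

lemma cutSize_eq_ncard {V : Type*} (G : SimpleGraph V) (A : Set V) :
    cutSize G A = Set.ncard {p : V × V | G.Adj p.1 p.2 ∧ p.1 ∈ A ∧ p.2 ∉ A} :=
  Nat.card_coe_set_eq _

lemma cross_case1 {V : Type*} (G : SimpleGraph V) (A : Set (V ⊕ V)) (v : V)
    (h1 : inl v ∈ A) (h2 : inr v ∈ A) :
    {p : (V ⊕ V) × (V ⊕ V) | (pendantGraph G).Adj p.1 p.2 ∧ p.1 ∈ A \ {inr v} ∧ p.2 ∉ A \ {inr v}}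
      = insert ((inl v : V ⊕ V), (inr v : V ⊕ V))
          {p | (pendantGraph G).Adj p.1 p.2 ∧ p.1 ∈ A ∧ p.2 ∉ A} := by
  ext ⟨p1, p2⟩
  rcases p1 with u | u <;> rcases p2 with w | w <;>
    simp only [Set.mem_setOf_eq, Set.mem_insert_iff, Set.mem_diff, Set.mem_singleton_iff,
      pend_ll, pend_lr, pend_rl, pend_rr, Prod.mk.injEq, inl.injEq, inr.injEq,
      reduceCtorEq, not_and, not_not, false_and, and_false, false_or, or_false,
      not_false_iff, and_true]
  · constructor
    · rintro ⟨rfl, ha, hb⟩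
      by_cases hw : Sum.inr u ∈ A
      · exact Or.inl ⟨hb hw, hb hw⟩
      · exact Or.inr ⟨rfl, ha, hw⟩
    · rintro (⟨rfl, rfl⟩ | ⟨rfl, ha, hb⟩)
      · exact ⟨rfl, h1, fun _ => rfl⟩
      · exact ⟨rfl, ha, fun hw => absurd hw hb⟩
  · constructor
    · rintro ⟨rfl, ⟨ha, -⟩, hb⟩
      exact ⟨rfl, ha, hb⟩
    · rintro ⟨rfl, ha, hb⟩
      refine ⟨rfl, ⟨ha, fun huv => hb ?_⟩, hb⟩
      rw [huv]; exact h1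

lemma cross_case2 {V : Type*} (G : SimpleGraph V) (A : Set (V ⊕ V)) (v : V)
    (h1 : inl v ∉ A) (h2 : inr v ∉ A) :
    {p : (V ⊕ V) × (V ⊕ V) | (pendantGraph G).Adj p.1 p.2 ∧ p.1 ∈ insert (inr v) A ∧ p.2 ∉ insert (inr v) A}
      = insert ((inr v : V ⊕ V), (inl v : V ⊕ V))
          {p | (pendantGraph G).Adj p.1 p.2 ∧ p.1 ∈ A ∧ p.2 ∉ A} := by
  ext ⟨p1, p2⟩
  rcases p1 with u | u <;> rcases p2 with w | w <;>
    simp only [Set.mem_setOf_eq, Set.mem_insert_iff, Set.mem_diff, Set.mem_singleton_iff,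
      pend_ll, pend_lr, pend_rl, pend_rr, Prod.mk.injEq, inl.injEq, inr.injEq,
      reduceCtorEq, not_and, not_not, not_or, false_and, and_false, false_or, or_false,
      not_false_iff, and_true]
  · tauto
  · constructor
    · rintro ⟨rfl, ha, -, hb⟩
      exact ⟨rfl, ha, hb⟩
    · rintro ⟨rfl, ha, hb⟩
      refine ⟨rfl, ha, fun hw => h1 ?_, hb⟩
      rw [← hw]; exact ha
  · constructor
    · rintro ⟨rfl, (rfl | ha), -, hb⟩
      · exact Or.inl ⟨rfl, rfl⟩
      · exact Or.inr ⟨rfl, ha, hb⟩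
    · rintro (⟨rfl, rfl⟩ | ⟨rfl, ha, hb⟩)
      · exact ⟨rfl, Or.inl rfl, trivial, h1⟩
      · exact ⟨rfl, Or.inr ha, trivial, hb⟩

lemma pendant_cross {V : Type*} [Fintype V] (G : SimpleGraph V) (A : Set (V ⊕ V))
    (hmax : ∀ B : Set (V ⊕ V), cutSize (pendantGraph G) B ≤ cutSize (pendantGraph G) A) (v : V) :
    inl v ∈ A ↔ inr v ∉ A := by
  constructor
  · intro h1 h2
    have h := hmax (A \ {inr v})
    rw [cutSize_eq_ncard, cutSize_eq_ncard, cross_case1 G A v h1 h2,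
      Set.ncard_insert_of_notMem (by simp [h2]) (Set.toFinite _)] at h
    omega
  · intro h2
    by_contra h1
    have h := hmax (insert (inr v) A)
    rw [cutSize_eq_ncard, cutSize_eq_ncard, cross_case2 G A v h1 h2,
      Set.ncard_insert_of_notMem (by simp [h2]) (Set.toFinite _)] at h
    omega

theorem maxcut_of_pendant_is_bisection {V : Type*} [Fintype V]
    (G : SimpleGraph V) (A : Set (V ⊕ V))
    (hmax : ∀ B : Set (V ⊕ V), cutSize (pendantGraph G) B ≤ cutSize (pendantGraph G) A) :
    Nat.card A = Nat.card (Aᶜ : Set (V ⊕ V)) := by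
  have key : ∀ v, (inl v ∈ A ↔ inr v ∉ A) := pendant_cross G A hmax
  have hA : (Aᶜ : Set (V ⊕ V)) = (Equiv.sumComm V V) '' A := by
    ext x
    rw [Set.mem_image_equiv]
    rcases x with v | v
    · have := key v
      simp only [Equiv.sumComm_symm, Equiv.sumComm_apply, Sum.swap_inl, Set.mem_compl_iff]
      tauto
    · have := key v
      simp only [Equiv.sumComm_symm, Equiv.sumComm_apply, Sum.swap_inr, Set.mem_compl_iff]
      tauto
  rw [Nat.card_coe_set_eq, Nat.card_coe_set_eq, hA,
    Set.ncard_image_of_injective A (Equiv.injective _)]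
end

section
/- Let C9 be the cycle on 9 vertices v1,...,v9 with three distinguished vertices x1 = v2, x2 = v5, x3 = v8 (pairwise at distance 3 on the cycle). For any cut (A, B) of C9, the cut contains at most 8 edges; moreover there exists a cut of size exactly 8 in which at least one xi lies in A and at least one xi lies in B, and conversely in every cut of size 8 not all of x1, x2, x3 lie on the same side of the partition. -/
/-- The cycle on 9 vertices, with vertex set `ZMod 9`. -/
def C9 : SimpleGraph (ZMod 9) := SimpleGraph.fromRel (fun i j => j = i + 1)

lemma C9_adj (a b : ZMod 9) : C9.Adj a b ↔ a ≠ b ∧ (b = a + 1 ∨ a = b + 1) :=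
  SimpleGraph.fromRel_adj _ a b

instance : DecidableRel C9.Adj := fun a b =>
  decidable_of_iff (a ≠ b ∧ (b = a + 1 ∨ a = b + 1)) (C9_adj a b).symm

/-- Decidable count of crossing ordered pairs for a boolean cut indicator. -/
def bCut (b : ZMod 9 → Bool) : ℕ :=
  (Finset.univ.filter (fun p : ZMod 9 × ZMod 9 => C9.Adj p.1 p.2 ∧ b p.1 ∧ ¬ b p.2)).card

lemma cut_eq (A : Set (ZMod 9)) (b : ZMod 9 → Bool) (hb : ∀ i, i ∈ A ↔ b i) :
    cutSize C9 A = bCut b := by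
  unfold cutSize bCut
  have e : {p : ZMod 9 × ZMod 9 // C9.Adj p.1 p.2 ∧ p.1 ∈ A ∧ p.2 ∉ A} ≃
      {p : ZMod 9 × ZMod 9 // C9.Adj p.1 p.2 ∧ b p.1 ∧ ¬ b p.2} :=
    Equiv.subtypeEquivRight (fun p => by
      simp only [hb])
  rw [Nat.card_congr e, Nat.card_eq_fintype_card, Fintype.card_subtype]

set_option maxRecDepth 10000 in
lemma key : ∀ b : ZMod 9 → Bool,
    bCut b ≤ 8 ∧ (bCut b = 8 →
      ¬((b 1 ∧ b 4 ∧ b 7) ∨ (¬ b 1 ∧ ¬ b 4 ∧ ¬ b 7))) := by decide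

theorem c9_cut_bound_and_distinguished :
    (∀ A : Set (ZMod 9), cutSize C9 A ≤ 8) ∧
    (∃ A : Set (ZMod 9), cutSize C9 A = 8 ∧
      (∃ x ∈ ({1, 4, 7} : Set (ZMod 9)), x ∈ A) ∧
      (∃ x ∈ ({1, 4, 7} : Set (ZMod 9)), x ∉ A)) ∧
    (∀ A : Set (ZMod 9), cutSize C9 A = 8 →
      ¬(((1 : ZMod 9) ∈ A ∧ (4 : ZMod 9) ∈ A ∧ (7 : ZMod 9) ∈ A) ∨
        ((1 : ZMod 9) ∉ A ∧ (4 : ZMod 9) ∉ A ∧ (7 : ZMod 9) ∉ A))) := by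
  have toB : ∀ A : Set (ZMod 9), ∃ b : ZMod 9 → Bool, ∀ i, i ∈ A ↔ b i := fun A =>
    ⟨fun i => @decide (i ∈ A) (Classical.propDecidable _),
     fun i => by simp [@decide_eq_true_iff _ (Classical.propDecidable _)]⟩
  refine ⟨fun A => ?_, ?_, fun A h8 => ?_⟩
  · obtain ⟨b, hb⟩ := toB A
    rw [cut_eq A b hb]; exact (key b).1
  · -- pattern T F T F T F T F F  (indices 0..8)
    let b : ZMod 9 → Bool := fun i => i ∈ ({0, 2, 4, 6} : Finset (ZMod 9))
    refine ⟨{i | b i}, ?_, ⟨4, by simp, ?_⟩, ⟨1, by simp, ?_⟩⟩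
    · rw [cut_eq _ b (fun i => by simp [Set.mem_setOf_eq])]
      decide
    · show b 4 = true; decide
    · show ¬ (b 1 = true); decide
  · obtain ⟨b, hb⟩ := toB A
    rw [cut_eq A b hb] at h8
    have := (key b).2 h8
    simp only [hb]
    tauto
end

section
/- Let G be the complete bipartite-like grid graph with vertex set X ∪ Y, X = {x1,...,xn}, Y = {y1,...,yn}, where every xi is adjacent to every yj (and X, Y are independent sets). Let C4 have consecutive vertices a, b, c, d. Suppose edge lists are imposed as follows: edge xi yi may only be mapped to ab or cd; for each edge (i,j) in a fixed graph F on [n], edge xi yj may only be mapped to cb, cd, or ad; all other edges xi yj are unconstrained. Then there exists a list-respecting homomorphism h : G → C4 with at least 2k vertices mapped into {a, b} if and only if F has an independent set of size at least k. -/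
/-- The 4-cycle `a–b–c–d–a`, with `a = 0`, `b = 1`, `c = 2`, `d = 3`. -/
def C4 : SimpleGraph (ZMod 4) := SimpleGraph.fromRel (fun i j => j = i + 1)

lemma card_aux (n : ℕ) (h : Fin n ⊕ Fin n → ZMod 4) (I : Finset (Fin n))
    (h1 : ∀ i, (h (Sum.inl i) = 0 ∨ h (Sum.inl i) = 1) ↔ i ∈ I)
    (h2 : ∀ i, (h (Sum.inr i) = 0 ∨ h (Sum.inr i) = 1) ↔ i ∈ I) :
    Nat.card {v : Fin n ⊕ Fin n // h v = 0 ∨ h v = 1} = 2 * I.card := by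
  have e : {v : Fin n ⊕ Fin n // h v = 0 ∨ h v = 1} ≃ ({i // i ∈ I} ⊕ {i // i ∈ I}) :=
    { toFun := fun v => match v with
        | ⟨Sum.inl i, hv⟩ => Sum.inl ⟨i, (h1 i).mp hv⟩
        | ⟨Sum.inr i, hv⟩ => Sum.inr ⟨i, (h2 i).mp hv⟩
      invFun := fun w => match w with
        | Sum.inl ⟨i, hi⟩ => ⟨Sum.inl i, (h1 i).mpr hi⟩
        | Sum.inr ⟨i, hi⟩ => ⟨Sum.inr i, (h2 i).mpr hi⟩
      left_inv := by rintro ⟨v | v, hv⟩ <;> rfl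
      right_inv := by rintro (⟨i, hi⟩ | ⟨i, hi⟩) <;> rfl }
  rw [Nat.card_congr e, Nat.card_sum, Nat.card_eq_finsetCard]
  omega

/-- Vertices of the grid graph: `inl i` is `x_i ∈ X`, `inr j` is `y_j ∈ Y`;
every `x_i` is adjacent to every `y_j`. -/
theorem grid_list_hom_C4_iff_independent_set (n : ℕ) (F : SimpleGraph (Fin n)) (k : ℕ) :
    (∃ h : Fin n ⊕ Fin n → ZMod 4,
        -- `h` is a homomorphism from the complete bipartite graph `K_{n,n}` to `C4`
        (∀ i j : Fin n, C4.Adj (h (Sum.inl i)) (h (Sum.inr j))) ∧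
        -- the edge `x_i y_i` is mapped to `ab` or to `cd`
        (∀ i : Fin n, s(h (Sum.inl i), h (Sum.inr i)) = s((0 : ZMod 4), 1) ∨
          s(h (Sum.inl i), h (Sum.inr i)) = s((2 : ZMod 4), 3)) ∧
        -- for `(i,j) ∈ E(F)`, the edge `x_i y_j` is mapped to `cb`, `cd` or `ad`
        (∀ i j : Fin n, F.Adj i j →
          s(h (Sum.inl i), h (Sum.inr j)) = s((2 : ZMod 4), 1) ∨
          s(h (Sum.inl i), h (Sum.inr j)) = s((2 : ZMod 4), 3) ∨
          s(h (Sum.inl i), h (Sum.inr j)) = s((0 : ZMod 4), 3)) ∧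
        -- at least `2k` vertices are mapped into `{a, b}`
        2 * k ≤ Nat.card {v : Fin n ⊕ Fin n // h v = 0 ∨ h v = 1}) ↔
      (∃ I : Finset (Fin n), k ≤ I.card ∧ ∀ i ∈ I, ∀ j ∈ I, ¬ F.Adj i j) := by
  constructor
  · rintro ⟨h, -, hd, hF, hcard⟩
    classical
    -- the four possibilities on the diagonal
    have hdiag : ∀ i : Fin n,
        (h (Sum.inl i) = 0 ∧ h (Sum.inr i) = 1) ∨ (h (Sum.inl i) = 1 ∧ h (Sum.inr i) = 0) ∨
        (h (Sum.inl i) = 2 ∧ h (Sum.inr i) = 3) ∨ (h (Sum.inl i) = 3 ∧ h (Sum.inr i) = 2) := by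
      intro i
      rcases hd i with hi | hi <;> rw [Sym2.eq_iff] at hi <;> tauto
    refine ⟨Finset.univ.filter (fun i => h (Sum.inl i) = 0 ∨ h (Sum.inl i) = 1), ?_, ?_⟩
    · have := card_aux n h (Finset.univ.filter (fun i => h (Sum.inl i) = 0 ∨ h (Sum.inl i) = 1))
        (fun i => by
        simp only [Finset.mem_filter, Finset.mem_univ, true_and]) (fun i => by
        simp only [Finset.mem_filter, Finset.mem_univ, true_and]
        rcases hdiag i with ⟨e1, e2⟩ | ⟨e1, e2⟩ | ⟨e1, e2⟩ | ⟨e1, e2⟩ <;>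
          rw [e1, e2] <;> decide)
      omega
    · intro i hi j hj hadj
      simp only [Finset.mem_filter, Finset.mem_univ, true_and] at hi hj
      have hyj : h (Sum.inr j) = 0 ∨ h (Sum.inr j) = 1 := by
        rcases hdiag j with ⟨e1, e2⟩ | ⟨e1, e2⟩ | ⟨e1, e2⟩ | ⟨e1, e2⟩ <;>
          rw [e1] at hj <;> rw [e2] <;> revert hj <;> decide
      rcases hF i j hadj with he | he | he <;> rw [Sym2.eq_iff] at he <;>
        rcases he with ⟨e1, e2⟩ | ⟨e1, e2⟩ <;>
        rw [e1] at hi <;> rw [e2] at hyj <;> revert hi hyj <;> decide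
  · rintro ⟨I, hk, hind⟩
    classical
    refine ⟨Sum.elim (fun i => if i ∈ I then 0 else 2) (fun i => if i ∈ I then 1 else 3),
      ?_, ?_, ?_, ?_⟩
    · intro i j
      simp only [Sum.elim_inl, Sum.elim_inr, C4, SimpleGraph.fromRel_adj]
      split <;> split <;> decide
    · intro i
      simp only [Sum.elim_inl, Sum.elim_inr]
      split <;> simp
    · intro i j hadj
      have hnot : ¬ (i ∈ I ∧ j ∈ I) := fun ⟨hi, hj⟩ => hind i hi j hj hadj
      simp only [Sum.elim_inl, Sum.elim_inr]
      by_cases hi : i ∈ I <;> by_cases hj : j ∈ I <;>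
        simp [hi, hj] <;> tauto
    · have := card_aux n
        (Sum.elim (fun i => if i ∈ I then (0 : ZMod 4) else 2)
          (fun i => if i ∈ I then 1 else 3)) I
        (fun i => by simp only [Sum.elim_inl]; split <;> simp_all <;> decide)
        (fun i => by simp only [Sum.elim_inr]; split <;> simp_all <;> decide)
      omega
end

section
/- Let H be the graph on vertices {a, b} with edge ab and a loop at b. In the gadget consisting of a path f – e – s (f adjacent only to e; e adjacent only to f and s), any locally surjective homomorphism h of a graph G containing this gadget (with s possibly having further neighbors, but e and f having no other neighbors) must satisfy h(f) = a, h(e) = b, and h(s) = b; consequently s must have at least one neighbor mapped to a. -/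
/-- The target graph `H`: vertices `a = false` and `b = true`, with the edge `ab`
and a loop at `b` (no loop at `a`): `x` is adjacent to `y` iff `x` or `y` is `b`. -/
def Hab : Bool → Bool → Prop := fun x y => x = true ∨ y = true

theorem lsh_to_Hab_pendant_gadget {V : Type*} (G : SimpleGraph V) (h : V → Bool)
    (hhom : ∀ u v : V, G.Adj u v → Hab (h u) (h v))
    (hls : ∀ v : V, h '' G.neighborSet v = {w : Bool | Hab (h v) w})
    (f e s : V) (hfs : f ≠ s)
    (hf : G.neighborSet f = {e}) (he : G.neighborSet e = {f, s}) :
    h f = false ∧ h e = true ∧ h s = true ∧ ∃ u : V, G.Adj s u ∧ h u = false := by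
  have h1 := hls f
  rw [hf, Set.image_singleton] at h1
  have hfa : h f = false := by
    by_contra hc
    have hcf : h f = true := by simpa using hc
    have : (false : Bool) ∈ {w : Bool | Hab (h f) w} := Or.inl hcf
    rw [← h1] at this
    have : (true : Bool) ∈ {w : Bool | Hab (h f) w} := Or.inl hcf
    rw [← h1] at this
    simp only [Set.mem_singleton_iff] at *
    simp_all
  have heb : h e = true := by
    have : (true : Bool) ∈ {w : Bool | Hab (h f) w} := Or.inr rfl
    rw [← h1, Set.mem_singleton_iff] at this
    exact this.symm
  have h2 := hls e
  rw [he, heb] at h2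
  have hsb : h s = true := by
    by_contra hc
    have hcs : h s = false := by simpa using hc
    have ht : (true : Bool) ∈ {w : Bool | Hab true w} := Or.inl rfl
    rw [← h2] at ht
    obtain ⟨w, hw, hw'⟩ := ht
    rcases hw with rfl | rfl <;> simp_all
  refine ⟨hfa, heb, hsb, ?_⟩
  have h3 := hls s
  rw [hsb] at h3
  have : (false : Bool) ∈ {w : Bool | Hab true w} := Or.inl rfl
  rw [← h3] at this
  obtain ⟨u, hu, hu'⟩ := this
  exact ⟨u, hu, hu'⟩
end
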